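/- Let k > 2 be a fixed integer. For all sufficiently large d, the derivative of f_d(x) = (1 + (d−1)/(1 + (d−1)x^{k−1})^{k−1})^{−1} satisfies f_d'(x) < 1 for all x ∈ (1/2, 1). -/

import Mathlib

/-- `g_d(x) = 1/(1 + (d-1)x^(k-1))`. -/
noncomputable def gd (d k : ℕ) (x : ℝ) : ℝ := 1 / (1 + ((d : ℝ) - 1) * x ^ (k - 1))

/-- `f_d = g_d ∘ g_d`. -/
noncomputable def fd (d k : ℕ) (x : ℝ) : ℝ := gd d k (gd d k x)

lemma aux_hasDerivAt (c : ℝ) (n : ℕ) (x : ℝ) (h : 1 + c * x ^ n ≠ 0) :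
    HasDerivAt (fun x : ℝ => 1 / (1 + c * x ^ n))
      (-(c * ((n : ℝ) * x ^ (n - 1))) / (1 + c * x ^ n) ^ 2) x := by
  have h1 : HasDerivAt (fun x : ℝ => 1 + c * x ^ n) (c * ((n : ℝ) * x ^ (n - 1))) x :=
    ((hasDerivAt_pow n x).const_mul c).const_add 1
  simpa [one_div, Pi.inv_def] using h1.inv h

lemma main_bound (c : ℝ) (n : ℕ) (hn : 2 ≤ n)
    (hc : (n : ℝ) ^ 2 * 2 ^ (n * (n - 1)) * 4 ^ n + 1 ≤ c)
    (x y : ℝ) (hx1 : 1 / 2 < x) (hx2 : x < 1) (hy' : y = 1 / (1 + c * x ^ n)) :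
    (-(c * ((n : ℝ) * y ^ (n - 1))) / (1 + c * y ^ n) ^ 2) *
      (-(c * ((n : ℝ) * x ^ (n - 1))) / (1 + c * x ^ n) ^ 2) < 1 := by
  have hCr0 : (0 : ℝ) ≤ (n : ℝ) ^ 2 * 2 ^ (n * (n - 1)) * 4 ^ n := by positivity
  have hc1 : (1 : ℝ) ≤ c := by linarith
  have hc0 : (0 : ℝ) < c := by linarith
  have hx0 : (0 : ℝ) < x := lt_trans (by norm_num) hx1
  have hxn : ((1 : ℝ)/2) ^ n ≤ x ^ n := pow_le_pow_left₀ (by norm_num) hx1.le n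
  have hxnpos : (0 : ℝ) < x ^ n := pow_pos hx0 n
  have hA1 : (1 : ℝ) ≤ 1 + c * x ^ n := by nlinarith
  have hA0 : (0 : ℝ) < 1 + c * x ^ n := by linarith
  have hclow : (0 : ℝ) < c * ((1 : ℝ)/2) ^ n := by positivity
  have hAlow : c * ((1 : ℝ)/2) ^ n ≤ 1 + c * x ^ n := by nlinarith
  have hy0 : (0 : ℝ) ≤ y := by rw [hy']; exact (one_div_pos.mpr hA0).le
  have hyle : y ≤ 2 ^ n / c := by
    rw [hy']
    calc 1 / (1 + c * x ^ n) ≤ 1 / (c * ((1:ℝ)/2) ^ n) :=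
          one_div_le_one_div_of_le hclow hAlow
      _ = 2 ^ n / c := by
          rw [div_pow, one_pow, mul_one_div, one_div_div]
  have hB1 : (1 : ℝ) ≤ 1 + c * y ^ n := by nlinarith [pow_nonneg hy0 n]
  have hB0 : (0 : ℝ) < 1 + c * y ^ n := by linarith
  have hprod : (-(c * ((n : ℝ) * y ^ (n - 1))) / (1 + c * y ^ n) ^ 2) *
       (-(c * ((n : ℝ) * x ^ (n - 1))) / (1 + c * x ^ n) ^ 2) =
      (c * ((n : ℝ) * y ^ (n - 1)) / (1 + c * y ^ n) ^ 2) *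
      (c * ((n : ℝ) * x ^ (n - 1)) / (1 + c * x ^ n) ^ 2) := by ring
  rw [hprod]
  -- bound first factor
  have hynn : (0 : ℝ) ≤ c * ((n : ℝ) * y ^ (n - 1)) := by positivity
  have hB2 : (1 : ℝ) ≤ (1 + c * y ^ n) ^ 2 := by nlinarith
  have hp1 : c * ((n : ℝ) * y ^ (n - 1)) / (1 + c * y ^ n) ^ 2 ≤
      c * ((n : ℝ) * y ^ (n - 1)) := div_le_self hynn hB2
  have hyp : y ^ (n - 1) ≤ ((2 : ℝ) ^ n / c) ^ (n - 1) := pow_le_pow_left₀ hy0 hyle _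
  have hpow : ((2 : ℝ) ^ n / c) ^ (n - 1) = 2 ^ (n * (n - 1)) / c ^ (n - 1) := by
    rw [div_pow, ← pow_mul]
  have hcsel : c ≤ c ^ (n - 1) := le_self_pow₀ hc1 (by omega)
  have hcc : c / c ^ (n - 1) ≤ 1 := by
    rw [div_le_one (by positivity)]; exact hcsel
  have key : c * ((n : ℝ) * y ^ (n - 1)) ≤ (n : ℝ) * 2 ^ (n * (n - 1)) := by
    calc c * ((n : ℝ) * y ^ (n - 1))
        ≤ c * ((n : ℝ) * (2 ^ (n * (n - 1)) / c ^ (n - 1))) := by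
          apply mul_le_mul_of_nonneg_left _ hc0.le
          apply mul_le_mul_of_nonneg_left _ (Nat.cast_nonneg n)
          rw [← hpow]; exact hyp
      _ = (n : ℝ) * 2 ^ (n * (n - 1)) * (c / c ^ (n - 1)) := by ring
      _ ≤ (n : ℝ) * 2 ^ (n * (n - 1)) * 1 :=
          mul_le_mul_of_nonneg_left hcc (by positivity)
      _ = (n : ℝ) * 2 ^ (n * (n - 1)) := mul_one _
  have hP : c * ((n : ℝ) * y ^ (n - 1)) / (1 + c * y ^ n) ^ 2 ≤
      (n : ℝ) * 2 ^ (n * (n - 1)) := le_trans hp1 key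
  -- bound second factor
  have hxm1 : x ^ (n - 1) ≤ 1 := pow_le_one₀ hx0.le hx2.le
  have hnum : c * ((n : ℝ) * x ^ (n - 1)) ≤ c * (n : ℝ) := by
    calc c * ((n : ℝ) * x ^ (n - 1)) ≤ c * ((n : ℝ) * 1) :=
          mul_le_mul_of_nonneg_left
            (mul_le_mul_of_nonneg_left hxm1 (Nat.cast_nonneg n)) hc0.le
      _ = c * (n : ℝ) := by ring
  have h2b : ((2 : ℝ) ^ n) ^ 2 = 4 ^ n := by
    rw [← pow_mul, mul_comm, pow_mul]; norm_num
  have h2 : (c * ((1:ℝ)/2) ^ n) ^ 2 = c ^ 2 / 4 ^ n := by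
    rw [div_pow, one_pow, mul_one_div, div_pow, h2b]
  have hden : c ^ 2 / 4 ^ n ≤ (1 + c * x ^ n) ^ 2 := by
    have h1 : (c * ((1:ℝ)/2) ^ n) ^ 2 ≤ (1 + c * x ^ n) ^ 2 :=
      pow_le_pow_left₀ hclow.le hAlow 2
    linarith [h2 ▸ h1]
  have hdenpos : (0 : ℝ) < c ^ 2 / 4 ^ n := by positivity
  have hQ : c * ((n : ℝ) * x ^ (n - 1)) / (1 + c * x ^ n) ^ 2 ≤ (n : ℝ) * 4 ^ n / c := by
    have h := div_le_div₀ (by positivity) hnum hdenpos hden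
    calc c * ((n : ℝ) * x ^ (n - 1)) / (1 + c * x ^ n) ^ 2
        ≤ c * (n : ℝ) / (c ^ 2 / 4 ^ n) := h
      _ = (n : ℝ) * 4 ^ n / c := by
          field_simp
  have hq0 : (0 : ℝ) ≤ c * ((n : ℝ) * x ^ (n - 1)) / (1 + c * x ^ n) ^ 2 := by positivity
  have hP0 : (0 : ℝ) ≤ (n : ℝ) * 2 ^ (n * (n - 1)) := by positivity
  have hfinal : (c * ((n : ℝ) * y ^ (n - 1)) / (1 + c * y ^ n) ^ 2) *
      (c * ((n : ℝ) * x ^ (n - 1)) / (1 + c * x ^ n) ^ 2) ≤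
      ((n : ℝ) * 2 ^ (n * (n - 1))) * ((n : ℝ) * 4 ^ n / c) :=
    mul_le_mul hP hQ hq0 hP0
  have hCr : ((n : ℝ) * 2 ^ (n * (n - 1))) * ((n : ℝ) * 4 ^ n / c) =
      ((n : ℝ) ^ 2 * 2 ^ (n * (n - 1)) * 4 ^ n) / c := by ring
  rw [hCr] at hfinal
  have hlast : ((n : ℝ) ^ 2 * 2 ^ (n * (n - 1)) * 4 ^ n) / c < 1 := by
    rw [div_lt_one hc0]; linarith
  linarith

/-- For fixed `k > 2` and all sufficiently large `d`: the derivative of `f_d` is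
less than `1` on `(1/2, 1)`. -/
theorem fd_deriv_lt_one (k : ℕ) (hk : 2 < k) :
    ∃ d₀ : ℕ, ∀ d : ℕ, d₀ ≤ d →
      ∀ x ∈ Set.Ioo (1 / 2 : ℝ) 1, deriv (fd d k) x < 1 := by
  refine ⟨(k - 1) ^ 2 * 2 ^ ((k - 1) * (k - 1 - 1)) * 4 ^ (k - 1) + 2, fun d hd x hx => ?_⟩
  obtain ⟨hx1, hx2⟩ := hx
  set n := k - 1 with hn'
  have hn : 2 ≤ n := by omega
  set c : ℝ := (d : ℝ) - 1 with hc'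
  have hd' : ((n : ℝ) ^ 2 * 2 ^ (n * (n - 1)) * 4 ^ n + 2) ≤ (d : ℝ) := by
    exact_mod_cast hd
  have hcC : (n : ℝ) ^ 2 * 2 ^ (n * (n - 1)) * 4 ^ n + 1 ≤ c := by rw [hc']; linarith
  have hc0 : (0 : ℝ) < c := by
    have : (0 : ℝ) ≤ (n : ℝ) ^ 2 * 2 ^ (n * (n - 1)) * 4 ^ n := by positivity
    linarith
  have hx0 : (0 : ℝ) < x := lt_trans (by norm_num) hx1
  have hA0 : (0 : ℝ) < 1 + c * x ^ n := by
    have : (0:ℝ) ≤ c * x ^ n := mul_nonneg hc0.le (pow_nonneg hx0.le n)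
    linarith
  have hy0 : (0 : ℝ) ≤ 1 / (1 + c * x ^ n) := (one_div_pos.mpr hA0).le
  have hB0 : (0 : ℝ) < 1 + c * (1 / (1 + c * x ^ n)) ^ n := by
    have : (0:ℝ) ≤ c * (1 / (1 + c * x ^ n)) ^ n := mul_nonneg hc0.le (pow_nonneg hy0 n)
    linarith
  have hdx := aux_hasDerivAt c n x hA0.ne'
  have hdy := aux_hasDerivAt c n (1 / (1 + c * x ^ n)) hB0.ne'
  have hfd : HasDerivAt (fd d k)
      ((-(c * ((n : ℝ) * (1 / (1 + c * x ^ n)) ^ (n - 1))) /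
          (1 + c * (1 / (1 + c * x ^ n)) ^ n) ^ 2) *
       (-(c * ((n : ℝ) * x ^ (n - 1))) / (1 + c * x ^ n) ^ 2)) x := by
    have h := hdy.comp x hdx
    exact h
  rw [hfd.deriv]
  exact main_bound c n hn hcC x _ hx1 hx2 rfl
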